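/- Let ε ∈ (0,1/4) and let A be a real random variable on a finite probability space with 𝔼[A^k] ≥ (2ε)^k for some even k and 𝔼[A^t] ≥ 0 for every integer t ≥ 1. Then for all integers p ≥ k/ε, 𝔼[|1+A|^p] ≥ (1+ε)^p. -/

import Mathlib

set_option maxHeartbeats 1000000


open Finset

/-- For `k ≥ 6`, `e^k * k! ≤ (3k/2)^k`. -/
lemma aux_fact_bound : ∀ k : ℕ, 6 ≤ k → Real.exp 1 ^ k * k.factorial ≤ (3 * k / 2) ^ k := by
  intro k hk
  induction k with
  | zero => omega
  | succ n ih =>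
    rcases Nat.lt_or_ge n 6 with h6 | h6
    · have hn : n = 5 := by omega
      subst hn
      have he : Real.exp 1 ^ 6 ≤ (2.7182818286 : ℝ) ^ 6 :=
        pow_le_pow_left₀ (Real.exp_pos 1).le Real.exp_one_lt_d9.le 6
      have h2 : (2.7182818286 : ℝ) ^ 6 ≤ 404 := by norm_num
      have h6' : Real.exp 1 ^ 6 ≤ 404 := he.trans h2
      show Real.exp 1 ^ 6 * ((Nat.factorial 6 : ℕ) : ℝ) ≤ (3 * ((6:ℕ):ℝ) / 2) ^ 6
      have hf : ((Nat.factorial 6 : ℕ) : ℝ) = 720 := by norm_num [Nat.factorial]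
      rw [hf]
      push_cast
      nlinarith [h6']
    · have ih' := ih h6
      have hn0 : (0:ℝ) < (n:ℝ) := by
        have : (6:ℝ) ≤ (n:ℝ) := by exact_mod_cast h6
        linarith
      have hne : (n:ℝ) ≠ 0 := ne_of_gt hn0
      have h2 : (2:ℝ) ≤ (1 + 1/(n:ℝ)) ^ n := by
        have hge : (0:ℝ) ≤ 1/(n:ℝ) := by positivity
        have := one_add_mul_le_pow (show (-2:ℝ) ≤ 1/(n:ℝ) by linarith) n
        have hid : (n:ℝ) * (1/(n:ℝ)) = 1 := by field_simp
        rw [hid] at this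
        linarith
      have heq : (3 * (((n:ℕ):ℝ)+1) / 2) = (3 * (n:ℝ) / 2) * (1 + 1/(n:ℝ)) := by
        field_simp
      have hexp3 : Real.exp 1 ≤ 3 := by
        have := Real.exp_one_lt_d9; linarith
      calc Real.exp 1 ^ (n+1) * ((n+1).factorial : ℝ)
          = (Real.exp 1 * ((n:ℝ)+1)) * (Real.exp 1 ^ n * (n.factorial : ℝ)) := by
            rw [Nat.factorial_succ]; push_cast; ring
        _ ≤ (Real.exp 1 * ((n:ℝ)+1)) * (3 * n / 2) ^ n := by
            apply mul_le_mul_of_nonneg_left ih'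
            positivity
        _ ≤ (3 * ((n:ℝ)+1)) * (3 * n / 2) ^ n := by
            apply mul_le_mul_of_nonneg_right _ (by positivity)
            nlinarith
        _ = (3 * (n:ℝ) / 2) ^ n * 2 * (3 * ((n:ℝ)+1) / 2) := by ring
        _ ≤ (3 * (n:ℝ) / 2) ^ n * (1 + 1/(n:ℝ)) ^ n * (3 * ((n:ℝ)+1) / 2) := by
            apply mul_le_mul_of_nonneg_right _ (by positivity)
            exact mul_le_mul_of_nonneg_left h2 (by positivity)
        _ = (3 * (((n:ℕ):ℝ)+1) / 2) ^ (n+1) := by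
            rw [pow_succ, heq, mul_pow]
        _ = (3 * ((n+1 : ℕ):ℝ) / 2) ^ (n+1) := by push_cast; ring_nf

lemma aux_div_le_div {a b c : ℝ} (h : a ≤ b) (hc : 0 < c) : a / c ≤ b / c := by
  exact (div_le_div_iff_of_pos_right hc).mpr h

/-- lower bound for binomial coefficients, real version. -/
lemma aux_choose_lb (q t : ℕ) (ht : t ≤ q) :
    ((q:ℝ) + 1 - t) ^ t ≤ (t.factorial : ℝ) * (q.choose t) := by
  have h := Nat.pow_sub_le_descFactorial q t
  rw [Nat.descFactorial_eq_factorial_mul_choose] at h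
  have h' : (((q + 1 - t : ℕ) ^ t : ℕ) : ℝ) ≤ ((t.factorial * q.choose t : ℕ) : ℝ) := by
    exact_mod_cast h
  push_cast [Nat.cast_sub (show t ≤ q + 1 by omega)] at h'
  convert h' using 2 <;> push_cast <;> ring

/-- The core numeric inequality. -/
lemma aux_numeric (k q : ℕ) (ε : ℝ) (hε0 : 0 < ε) (hε1 : ε < 1/4)
    (hk : k = 2 ∨ k = 4 ∨ 6 ≤ k)
    (h1 : (k:ℝ) ≤ ε * q) (h2 : ε * q < k + ε) :
    (1 + ε) ^ q ≤ 1 + (q.choose k : ℝ) * (2*ε) ^ k + (q.choose (2*k) : ℝ) * (2*ε) ^ (2*k) := by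
  have hk2 : 2 ≤ k := by omega
  have hq0 : 0 < q := by
    rcases Nat.eq_zero_or_pos q with h | h
    · exfalso
      rw [h] at h1; push_cast at h1
      have hkR : (2:ℝ) ≤ (k:ℝ) := by exact_mod_cast hk2
      nlinarith
    · exact h
  have hq4k : 4 * k < q := by
    have hqR : (4 * k : ℝ) < (q : ℝ) := by
      have hqpos : (0:ℝ) < q := by exact_mod_cast hq0
      nlinarith
    exact_mod_cast hqR
  have hkq : k ≤ q := by omega
  have h2kq : 2 * k ≤ q := by omega
  -- RHS bound : (1+ε)^q ≤ exp (k + ε - 3 ε k / 8)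
  have hquad : 1 + ε + ε^2/2 ≤ Real.exp ε := by
    have h := Real.sum_le_exp_of_nonneg hε0.le 3
    simp [Finset.sum_range_succ, Nat.factorial] at h
    nlinarith [h]
  have hfacnn : (0:ℝ) ≤ 1 - 3*ε^2/8 := by nlinarith
  have hfac : 1 + ε ≤ Real.exp ε * (1 - 3*ε^2/8) := by
    have step : (1 + ε + ε^2/2) * (1 - 3*ε^2/8) ≤ Real.exp ε * (1 - 3*ε^2/8) :=
      mul_le_mul_of_nonneg_right hquad hfacnn
    have h3 : ε^3 ≤ ε^2/4 := by nlinarith [sq_nonneg ε]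
    have h4 : ε^4 ≤ ε^2/16 := by nlinarith [sq_nonneg ε, sq_nonneg (ε^2)]
    nlinarith [step, h3, h4]
  have hth : (1 - 3*ε^2/8) ≤ Real.exp (-(3*ε^2/8)) := by
    have := Real.add_one_le_exp (-(3*ε^2/8)); linarith
  have hrhs : (1 + ε) ^ q ≤ Real.exp ((k:ℝ) + ε - 3*ε*k/8) := by
    calc (1 + ε) ^ q ≤ (Real.exp ε * (1 - 3*ε^2/8)) ^ q := by
          apply pow_le_pow_left₀ (by linarith) hfac
      _ = Real.exp ε ^ q * (1 - 3*ε^2/8) ^ q := mul_pow _ _ _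
      _ ≤ Real.exp ε ^ q * Real.exp (-(3*ε^2/8)) ^ q := by
          apply mul_le_mul_of_nonneg_left _ (by positivity)
          exact pow_le_pow_left₀ hfacnn hth q
      _ = Real.exp (ε * q) * Real.exp (-(3*ε^2/8) * q) := by
          rw [← Real.exp_nat_mul, ← Real.exp_nat_mul]; ring_nf
      _ = Real.exp (ε * q - 3*ε^2/8 * q) := by rw [← Real.exp_add]; ring_nf
      _ ≤ Real.exp ((k:ℝ) + ε - 3*ε*k/8) := by
          apply Real.exp_le_exp.mpr
          have hm : ε * (k:ℝ) ≤ ε * (ε * q) := mul_le_mul_of_nonneg_left h1 hε0.le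
          nlinarith
  -- lower bounds for the two binomial terms
  have hT : ∀ t : ℕ, t ≤ q → (2 * ε * ((q:ℝ) + 1 - t)) ^ t / (t.factorial : ℝ)
      ≤ (q.choose t : ℝ) * (2*ε) ^ t := by
    intro t htq
    have hcb := aux_choose_lb q t htq
    have hfp : (0:ℝ) < (t.factorial : ℝ) := by exact_mod_cast t.factorial_pos
    rw [div_le_iff₀ hfp]
    have hqt : (0:ℝ) ≤ (q:ℝ) + 1 - t := by
      have : (t:ℝ) ≤ q := by exact_mod_cast htq
      linarith
    calc (2 * ε * ((q:ℝ) + 1 - t)) ^ t = (2*ε)^t * ((q:ℝ) + 1 - t)^t := mul_pow _ _ _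
      _ ≤ (2*ε)^t * ((t.factorial : ℝ) * (q.choose t)) := by
          apply mul_le_mul_of_nonneg_left hcb (by positivity)
      _ = (q.choose t : ℝ) * (2*ε)^t * (t.factorial : ℝ) := by ring
  have hchoosenn : (0:ℝ) ≤ (q.choose (2*k) : ℝ) * (2*ε) ^ (2*k) := by positivity
  rcases hk with hk | hk | hk
  · -- k = 2
    subst hk
    have hT1 := hT 2 hkq
    have hT2 := hT 4 (by omega)
    push_cast at h1 h2 hrhs
    norm_num [Nat.factorial] at hT1 hT2
    have hb1 : (7/2 : ℝ) ≤ 2 * ε * ((q:ℝ) + 1 - 2) := by nlinarith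
    have hb2 : (5/2 : ℝ) ≤ 2 * ε * ((q:ℝ) + 1 - 4) := by nlinarith
    have hp1 : (7/2 : ℝ)^2 ≤ (2 * ε * ((q:ℝ) + 1 - 2))^2 := by
      apply pow_le_pow_left₀ (by norm_num) hb1
    have hp2 : (5/2 : ℝ)^4 ≤ (2 * ε * ((q:ℝ) + 1 - 4))^4 := by
      apply pow_le_pow_left₀ (by norm_num) hb2
    -- RHS ≤ exp 2 * 16/15 ≤ 7.8817
    have hexp2 : Real.exp 2 ≤ 7.3890562 := by
      have he : Real.exp 1 ^ 2 ≤ (2.7182818286 : ℝ) ^ 2 :=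
        pow_le_pow_left₀ (Real.exp_pos 1).le Real.exp_one_lt_d9.le 2
      have : Real.exp 2 = Real.exp 1 ^ 2 := by
        rw [← Real.exp_nat_mul]; norm_num
      rw [this]; nlinarith
    have hexp116 : Real.exp (1/16 : ℝ) ≤ 16/15 := by
      have h := Real.add_one_le_exp (-(1/16 : ℝ))
      have hpos := Real.exp_pos (1/16 : ℝ)
      have hmul : Real.exp (1/16 : ℝ) * Real.exp (-(1/16 : ℝ)) = 1 := by
        rw [← Real.exp_add]; norm_num
      nlinarith
    have hrhs2 : (1 + ε) ^ q ≤ 7.3890562 * (16/15 : ℝ) := by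
      have h1' : (2:ℝ) + ε - 3*ε*(2:ℝ)/8 ≤ 2 + 1/16 := by nlinarith
      calc (1 + ε) ^ q ≤ Real.exp ((2:ℝ) + ε - 3*ε*(2:ℝ)/8) := hrhs
        _ ≤ Real.exp (2 + 1/16) := Real.exp_le_exp.mpr h1'
        _ = Real.exp 2 * Real.exp (1/16) := Real.exp_add 2 (1/16)
        _ ≤ 7.3890562 * (16/15 : ℝ) := by
            apply mul_le_mul hexp2 hexp116 (Real.exp_pos _).le (by norm_num)
    have hfin1 : (49/8 : ℝ) ≤ (q.choose 2 : ℝ) * (2*ε) ^ 2 := by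
      calc (49/8 : ℝ) = (7/2 : ℝ)^2 / 2 := by norm_num
        _ ≤ (2 * ε * ((q:ℝ) + 1 - 2))^2 / 2 := aux_div_le_div hp1 (by norm_num)
        _ ≤ (q.choose 2 : ℝ) * (2*ε) ^ 2 := hT1
    have hfin2 : (625/384 : ℝ) ≤ (q.choose 4 : ℝ) * (2*ε) ^ 4 := by
      calc (625/384 : ℝ) = (5/2 : ℝ)^4 / 24 := by norm_num
        _ ≤ (2 * ε * ((q:ℝ) + 1 - 4))^4 / 24 := aux_div_le_div hp2 (by norm_num)
        _ ≤ (q.choose 4 : ℝ) * (2*ε) ^ 4 := hT2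
    rw [show (2*2 : ℕ) = 4 by norm_num]
    linarith [hrhs2, hfin1, hfin2]
  · -- k = 4
    subst hk
    have hT1 := hT 4 hkq
    push_cast at h1 h2 hrhs
    norm_num [Nat.factorial] at hT1
    have hb1 : (13/2 : ℝ) ≤ 2 * ε * ((q:ℝ) + 1 - 4) := by nlinarith
    have hp1 : (13/2 : ℝ)^4 ≤ (2 * ε * ((q:ℝ) + 1 - 4))^4 := by
      apply pow_le_pow_left₀ (by norm_num) hb1
    have hexp4 : Real.exp 4 ≤ 54.59816 := by
      have he : Real.exp 1 ^ 4 ≤ (2.7182818286 : ℝ) ^ 4 :=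
        pow_le_pow_left₀ (Real.exp_pos 1).le Real.exp_one_lt_d9.le 4
      have h4 : Real.exp 4 = Real.exp 1 ^ 4 := by
        rw [← Real.exp_nat_mul]; norm_num
      rw [h4]; nlinarith
    have hrhs2 : (1 + ε) ^ q ≤ 54.59816 := by
      have h1' : (4:ℝ) + ε - 3*ε*(4:ℝ)/8 ≤ 4 := by nlinarith
      calc (1 + ε) ^ q ≤ Real.exp ((4:ℝ) + ε - 3*ε*(4:ℝ)/8) := hrhs
        _ ≤ Real.exp 4 := Real.exp_le_exp.mpr h1'
        _ ≤ 54.59816 := hexp4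
    have hfin1 : (28561/384 : ℝ) ≤ (q.choose 4 : ℝ) * (2*ε) ^ 4 := by
      calc (28561/384 : ℝ) = (13/2 : ℝ)^4 / 24 := by norm_num
        _ ≤ (2 * ε * ((q:ℝ) + 1 - 4))^4 / 24 := aux_div_le_div hp1 (by norm_num)
        _ ≤ (q.choose 4 : ℝ) * (2*ε) ^ 4 := hT1
    linarith [hrhs2, hfin1, hchoosenn]
  · -- 6 ≤ k
    have hT1 := hT k hkq
    have hb1 : 3 * (k:ℝ) / 2 ≤ 2 * ε * ((q:ℝ) + 1 - k) := by
      have hkR : (6:ℝ) ≤ (k:ℝ) := by exact_mod_cast hk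
      nlinarith
    have hp1 : (3 * (k:ℝ) / 2)^k ≤ (2 * ε * ((q:ℝ) + 1 - k))^k := by
      apply pow_le_pow_left₀ (by positivity) hb1
    have hfb := aux_fact_bound k hk
    have hrhs2 : (1 + ε) ^ q ≤ Real.exp 1 ^ k := by
      have hkR : (6:ℝ) ≤ (k:ℝ) := by exact_mod_cast hk
      have h1' : (k:ℝ) + ε - 3*ε*(k:ℝ)/8 ≤ (k:ℝ) := by nlinarith
      calc (1 + ε) ^ q ≤ Real.exp ((k:ℝ) + ε - 3*ε*(k:ℝ)/8) := hrhs
        _ ≤ Real.exp (k:ℝ) := Real.exp_le_exp.mpr h1'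
        _ = Real.exp 1 ^ k := by rw [← Real.exp_nat_mul]; ring_nf
    have hfp : (0:ℝ) < (k.factorial : ℝ) := by exact_mod_cast k.factorial_pos
    have hfin1 : Real.exp 1 ^ k ≤ (q.choose k : ℝ) * (2*ε) ^ k := by
      calc Real.exp 1 ^ k = Real.exp 1 ^ k * (k.factorial:ℝ) / (k.factorial:ℝ) := by
            field_simp
        _ ≤ (3 * (k:ℝ) / 2)^k / (k.factorial:ℝ) := by
            exact aux_div_le_div hfb hfp
        _ ≤ (2 * ε * ((q:ℝ) + 1 - k))^k / (k.factorial:ℝ) := by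
            exact aux_div_le_div hp1 hfp
        _ ≤ (q.choose k : ℝ) * (2*ε) ^ k := hT1
    nlinarith [hrhs2, hfin1, hchoosenn]
lemma aux_rpow_pow (x : ℝ) (hx : 0 ≤ x) (q p : ℕ) (hq : q ≠ 0) :
    (x ^ q : ℝ) ^ ((p:ℝ)/(q:ℝ)) = x ^ p := by
  rw [← Real.rpow_natCast x q, ← Real.rpow_mul hx, ← Real.rpow_natCast x p]
  congr 1
  field_simp

theorem moment_lower_bound_from_spectral_positivity {Ω : Type*} [Fintype Ω]
    (μ : Ω → ℝ) (hμ0 : ∀ ω, 0 ≤ μ ω) (hμ1 : ∑ ω, μ ω = 1)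
    (A : Ω → ℝ) (ε : ℝ) (hε : ε ∈ Set.Ioo (0 : ℝ) (1 / 4))
    (k : ℕ) (hk : 0 < k) (hkeven : Even k)
    (hAk : ∑ ω, μ ω * A ω ^ k ≥ (2 * ε) ^ k)
    (hAt : ∀ t : ℕ, 1 ≤ t → 0 ≤ ∑ ω, μ ω * A ω ^ t) :
    ∀ p : ℕ, (p : ℝ) ≥ k / ε → ∑ ω, μ ω * |1 + A ω| ^ p ≥ (1 + ε) ^ p := by
  obtain ⟨hε0, hε1⟩ := hε
  intro p hp
  set q := ⌈(k:ℝ)/ε⌉₊ with hqdef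
  have hq1 : (k:ℝ) ≤ ε * q := by
    have h := Nat.le_ceil ((k:ℝ)/ε)
    rw [← hqdef, div_le_iff₀ hε0] at h
    rw [mul_comm]
    exact h
  have hq2 : ε * q < k + ε := by
    have h := Nat.ceil_lt_add_one (show (0:ℝ) ≤ (k:ℝ)/ε by positivity)
    rw [← hqdef] at h
    have h2 := mul_lt_mul_of_pos_left h hε0
    have h3 : ε * ((k:ℝ)/ε) = k := by field_simp
    rw [mul_add, mul_one, h3] at h2
    exact h2
  have hq0 : q ≠ 0 := by
    intro h0
    rw [h0] at hq1
    push_cast at hq1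
    have : (1:ℝ) ≤ k := by exact_mod_cast hk
    nlinarith
  have hqp : q ≤ p := by
    rw [hqdef]
    exact Nat.ceil_le.mpr hp
  have hkcase : k = 2 ∨ k = 4 ∨ 6 ≤ k := by
    obtain ⟨m, hm⟩ := hkeven
    omega
  have hmom : ∀ t : ℕ, 0 ≤ ∑ ω, μ ω * A ω ^ t := by
    intro t
    cases t with
    | zero =>
        simp only [pow_zero, mul_one]
        rw [hμ1]; norm_num
    | succ n => exact hAt (n+1) (by omega)
  have hq4k : 4 * k < q := by
    have hq0' : (0:ℝ) < q := by
      have : 0 < q := Nat.pos_of_ne_zero hq0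
      exact_mod_cast this
    have hkR : (1:ℝ) ≤ k := by exact_mod_cast hk
    have : (4*(k:ℝ)) < q := by nlinarith
    exact_mod_cast this
  have hsub : ({0, k, 2*k} : Finset ℕ) ⊆ range (q+1) := by
    intro t ht
    simp only [Finset.mem_insert, Finset.mem_singleton] at ht
    rcases ht with rfl|rfl|rfl <;> (apply Finset.mem_range.mpr; omega)
  have hbinom : ∑ ω, μ ω * (1 + A ω)^q
      = ∑ t ∈ range (q+1), (q.choose t : ℝ) * ∑ ω, μ ω * A ω ^ t := by
    have step : ∀ ω, μ ω * (1 + A ω)^q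
        = ∑ t ∈ range (q+1), (q.choose t : ℝ) * (μ ω * A ω ^ t) := by
      intro ω
      rw [add_comm (1:ℝ), add_pow, Finset.mul_sum]
      refine Finset.sum_congr rfl fun t _ => by ring
    rw [Finset.sum_congr rfl (fun ω _ => step ω), Finset.sum_comm]
    refine Finset.sum_congr rfl fun t _ => ?_
    rw [Finset.mul_sum]
  have hx3 : ∑ t ∈ ({0, k, 2*k} : Finset ℕ), (q.choose t : ℝ) * ∑ ω, μ ω * A ω ^ t
      ≤ ∑ t ∈ range (q+1), (q.choose t : ℝ) * ∑ ω, μ ω * A ω ^ t := by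
    apply Finset.sum_le_sum_of_subset_of_nonneg hsub
    intro t _ _
    exact mul_nonneg (by positivity) (hmom t)
  have hset : ∑ t ∈ ({0, k, 2*k} : Finset ℕ), (q.choose t : ℝ) * ∑ ω, μ ω * A ω ^ t
      = (q.choose 0 : ℝ) * (∑ ω, μ ω * A ω ^ 0) + (q.choose k : ℝ) * (∑ ω, μ ω * A ω ^ k)
        + (q.choose (2*k) : ℝ) * (∑ ω, μ ω * A ω ^ (2*k)) := by
    rw [Finset.sum_insert (by simp; omega), Finset.sum_insert (by simp; omega),
      Finset.sum_singleton]
    ring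
  have h0term : (q.choose 0 : ℝ) * (∑ ω, μ ω * A ω ^ 0) = 1 := by
    simp [hμ1]
  have hsq : ((2*ε)^k)^2 ≤ ∑ ω, μ ω * A ω ^ (2*k) := by
    have hmean := Real.pow_arith_mean_le_arith_mean_pow Finset.univ μ (fun ω => A ω ^ k)
      (fun i _ => hμ0 i) hμ1 (fun i _ => hkeven.pow_nonneg _) 2
    have h1 : ((2*ε)^k)^2 ≤ (∑ ω, μ ω * A ω ^ k)^2 := by
      apply pow_le_pow_left₀ (by positivity) hAk
    calc ((2*ε)^k)^2 ≤ (∑ ω, μ ω * A ω ^ k)^2 := h1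
      _ ≤ ∑ ω, μ ω * (A ω ^ k)^2 := hmean
      _ = ∑ ω, μ ω * A ω ^ (2*k) := by
          refine Finset.sum_congr rfl fun ω _ => ?_
          rw [← pow_mul, mul_comm k 2]
  have hnum := aux_numeric k q ε hε0 (by linarith : ε < 1/4) hkcase hq1 hq2
  have key : (1+ε)^q ≤ ∑ ω, μ ω * |1 + A ω|^q := by
    calc (1+ε)^q
        ≤ 1 + (q.choose k : ℝ) * (2*ε)^k + (q.choose (2*k) : ℝ) * (2*ε)^(2*k) := hnum
      _ ≤ (q.choose 0 : ℝ) * (∑ ω, μ ω * A ω ^ 0) + (q.choose k : ℝ) * (∑ ω, μ ω * A ω ^ k)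
          + (q.choose (2*k) : ℝ) * (∑ ω, μ ω * A ω ^ (2*k)) := by
          rw [h0term]
          have t1 : (q.choose k : ℝ) * (2*ε)^k ≤ (q.choose k : ℝ) * ∑ ω, μ ω * A ω ^ k :=
            mul_le_mul_of_nonneg_left hAk (by positivity)
          have t2 : (q.choose (2*k) : ℝ) * (2*ε)^(2*k)
              ≤ (q.choose (2*k) : ℝ) * ∑ ω, μ ω * A ω ^ (2*k) := by
            apply mul_le_mul_of_nonneg_left _ (by positivity)
            calc (2*ε)^(2*k) = ((2*ε)^k)^2 := by rw [← pow_mul, mul_comm k 2]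
              _ ≤ _ := hsq
          linarith
      _ ≤ ∑ t ∈ range (q+1), (q.choose t : ℝ) * ∑ ω, μ ω * A ω ^ t := by
          rw [← hset]; exact hx3
      _ = ∑ ω, μ ω * (1 + A ω)^q := hbinom.symm
      _ ≤ ∑ ω, μ ω * |1 + A ω|^q := by
          apply Finset.sum_le_sum
          intro ω _
          apply mul_le_mul_of_nonneg_left _ (hμ0 ω)
          rw [← abs_pow]
          exact le_abs_self _
  have hq0' : (0:ℝ) < q := by
    have : 0 < q := Nat.pos_of_ne_zero hq0
    exact_mod_cast this
  have hr : 1 ≤ (p:ℝ)/(q:ℝ) := by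
    rw [le_div_iff₀ hq0', one_mul]
    exact_mod_cast hqp
  have jensen := Real.rpow_arith_mean_le_arith_mean_rpow Finset.univ μ
    (fun ω => |1 + A ω|^q) (fun i _ => hμ0 i) hμ1 (fun i _ => by positivity) hr
  rw [ge_iff_le]
  calc (1+ε)^p = ((1+ε)^q : ℝ) ^ ((p:ℝ)/(q:ℝ)) :=
        (aux_rpow_pow (1+ε) (by linarith) q p hq0).symm
    _ ≤ (∑ ω, μ ω * |1 + A ω|^q) ^ ((p:ℝ)/(q:ℝ)) :=
        Real.rpow_le_rpow (by positivity) key (by linarith)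
    _ ≤ ∑ ω, μ ω * (|1 + A ω|^q) ^ ((p:ℝ)/(q:ℝ)) := jensen
    _ = ∑ ω, μ ω * |1 + A ω|^p := by
        refine Finset.sum_congr rfl fun ω _ => ?_
        rw [aux_rpow_pow _ (abs_nonneg _) q p hq0]
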